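/- Let g : ℕ → ℕ be the unique function satisfying g(0) = 0, g(2n) = 4·g(n) and g(2n+1) = g(2n) + 1. Then for all r, s ∈ ℕ, g(r+s) ≥ g(r) + g(s). -/
import Mathlib

/-- If `g : ℕ → ℕ` satisfies `g(0) = 0`, `g(2n) = 4·g(n)` and `g(2n+1) = g(2n) + 1`
(such a `g` is unique), then `g` is super-additive: `g(r+s) ≥ g(r) + g(s)`. -/
theorem stmt9 (g : ℕ → ℕ) (h0 : g 0 = 0)
    (heven : ∀ n, g (2 * n) = 4 * g n)
    (hodd : ∀ n, g (2 * n + 1) = g (2 * n) + 1) :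
    ∀ r s : ℕ, g r + g s ≤ g (r + s) := by
  have h1 : g 1 = 1 := by
    have h := hodd 0
    have h' := heven 0
    norm_num at h h'
    omega
  have key : ∀ n, ∀ r s : ℕ, r + s = n → g r + g s ≤ g (r + s) := by
    intro n
    induction n using Nat.strong_induction_on with
    | _ n ih =>
      intro r s hn
      rcases Nat.even_or_odd r with ⟨a, ha⟩ | ⟨a, ha⟩ <;>
        rcases Nat.even_or_odd s with ⟨b, hb⟩ | ⟨b, hb⟩
      · -- even, even
        have ha' : r = 2 * a := by omega
        have hb' : s = 2 * b := by omega
        subst ha' hb'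
        have hs : 2 * a + 2 * b = 2 * (a + b) := by ring
        rw [hs, heven, heven, heven]
        rcases Nat.eq_zero_or_pos (a + b) with h | h
        · have : a = 0 ∧ b = 0 := by omega
          simp [this.1, this.2, h0]
        · have := ih (a + b) (by omega) a b rfl
          omega
      · -- even, odd
        have ha' : r = 2 * a := by omega
        have hb' : s = 2 * b + 1 := by omega
        subst ha' hb'
        have hs : 2 * a + (2 * b + 1) = 2 * (a + b) + 1 := by ring
        rw [hs, hodd, heven, hodd, heven, heven]
        rcases Nat.eq_zero_or_pos (a + b) with h | h
        · have : a = 0 ∧ b = 0 := by omega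
          simp [this.1, this.2, h0]
        · have := ih (a + b) (by omega) a b rfl
          omega
      · -- odd, even
        have ha' : r = 2 * a + 1 := by omega
        have hb' : s = 2 * b := by omega
        subst ha' hb'
        have hs : 2 * a + 1 + 2 * b = 2 * (a + b) + 1 := by ring
        rw [hs, hodd, hodd, heven, heven, heven]
        rcases Nat.eq_zero_or_pos (a + b) with h | h
        · have : a = 0 ∧ b = 0 := by omega
          simp [this.1, this.2, h0]
        · have := ih (a + b) (by omega) a b rfl
          omega
      · -- odd, odd
        have ha' : r = 2 * a + 1 := by omega
        have hb' : s = 2 * b + 1 := by omega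
        subst ha' hb'
        have hs : 2 * a + 1 + (2 * b + 1) = 2 * (a + b + 1) := by ring
        rw [hs, hodd, hodd, heven, heven, heven]
        have h2 : g (a + b) + g 1 ≤ g (a + b + 1) := ih (a + b + 1) (by omega) (a + b) 1 rfl
        rcases Nat.eq_zero_or_pos (a + b) with h | h
        · have : a = 0 ∧ b = 0 := by omega
          obtain ⟨rfl, rfl⟩ := this
          simp [h0, h1]
        · have h3 := ih (a + b) (by omega) a b rfl
          omega
  intro r s
  exact key (r + s) r s rfl
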